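/- Let φ, φ_M, φ_P : ℝ → ℝ be continuous, even, 2π-periodic functions with φ continuously differentiable, satisfying ∫₀^{2π}φ_M(θ)dθ = 1, ∫₀^{2π}φ(θ)φ_P(θ)dθ = 1, ∫₀^{2π}φ_P(θ)dθ = 0, and ∫₀^{2π}φ(θ)φ_M(θ)dθ = 0. Define Φ₁ = φ', Φ₂ = φ_M, Φ₃ = φ_P, Ψ₁(θ) = −∫₀^θ φ_P(z)dz, Ψ₂ = 1, Ψ₃ = φ. Then Ψ₁ is 2π-periodic, and ⟨Ψ_j, Φ_ℓ⟩ = δ_{jℓ} for all j, ℓ ∈ {1,2,3}, where ⟨f,g⟩ = ∫₀^{2π} f(θ)g(θ)dθ and δ_{jℓ} is the Kronecker delta. -/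

import Mathlib

open MeasureTheory Real

/-- An odd, periodic, continuous function integrates to zero over a period. -/
lemma odd_periodic_integral_zero (g : ℝ → ℝ) (hgc : Continuous g)
    (hgo : ∀ θ, g (-θ) = -g θ) (hgp : Function.Periodic g (2 * π)) :
    ∫ θ in (0:ℝ)..(2 * π), g θ = 0 := by
  have hshift : ∫ θ in (0:ℝ)..(2 * π), g θ = ∫ θ in (-π)..π, g θ := by
    have h := hgp.intervalIntegral_add_eq 0 (-π)
    rw [zero_add] at h
    rw [h]
    ring_nf
  have hneg : ∫ θ in (-π)..(0:ℝ), g θ = -∫ θ in (0:ℝ)..π, g θ := by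
    have h := intervalIntegral.integral_comp_neg (a := (0:ℝ)) (b := π) g
    rw [neg_zero] at h
    rw [← h]
    simp only [hgo]
    rw [intervalIntegral.integral_neg]
  have hsplit : (∫ θ in (-π)..(0:ℝ), g θ) + ∫ θ in (0:ℝ)..π, g θ = ∫ θ in (-π)..π, g θ :=
    intervalIntegral.integral_add_adjacent_intervals
      (hgc.intervalIntegrable _ _) (hgc.intervalIntegrable _ _)
  rw [hshift, ← hsplit, hneg]
  ring

/-- Biorthogonality of the right basis `{Φ_ℓ} = {φ', φ_M, φ_P}` and left basis
`{Ψ_j} = {−∫₀^θ φ_P, 1, φ}` of the generalized kernel of the linearized operator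
(Proposition 4.1 of the paper). -/
theorem generalized_kernel_biorthogonal
    (φ φd φM φP : ℝ → ℝ)
    (hφc : Continuous φ) (hφMc : Continuous φM) (hφPc : Continuous φP)
    (hφe : ∀ θ, φ (-θ) = φ θ) (hφMe : ∀ θ, φM (-θ) = φM θ) (hφPe : ∀ θ, φP (-θ) = φP θ)
    (hφp : Function.Periodic φ (2 * π)) (hφMp : Function.Periodic φM (2 * π))
    (hφPp : Function.Periodic φP (2 * π))
    (hφd : ∀ θ, HasDerivAt φ (φd θ) θ) (hφdc : Continuous φd)
    (h1 : ∫ θ in (0:ℝ)..(2 * π), φM θ = 1)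
    (h2 : ∫ θ in (0:ℝ)..(2 * π), φ θ * φP θ = 1)
    (h3 : ∫ θ in (0:ℝ)..(2 * π), φP θ = 0)
    (h4 : ∫ θ in (0:ℝ)..(2 * π), φ θ * φM θ = 0) :
    Function.Periodic (fun θ : ℝ => -∫ z in (0:ℝ)..θ, φP z) (2 * π) ∧
    ∀ j ℓ : Fin 3,
      (∫ θ in (0:ℝ)..(2 * π),
        (![fun θ : ℝ => -∫ z in (0:ℝ)..θ, φP z, fun _ : ℝ => (1:ℝ), φ] j θ) *
          (![φd, φM, φP] ℓ θ))
        = if j = ℓ then 1 else 0 := by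
  set F : ℝ → ℝ := fun θ => ∫ z in (0:ℝ)..θ, φP z with hFdef
  have hFd : ∀ θ, HasDerivAt F (φP θ) θ := fun θ =>
    intervalIntegral.integral_hasDerivAt_right (hφPc.intervalIntegrable 0 θ)
      (hφPc.stronglyMeasurableAtFilter _ _) hφPc.continuousAt
  have hFc : Continuous F := continuous_iff_continuousAt.mpr fun θ => (hFd θ).continuousAt
  have hF0 : F 0 = 0 := by simp [hFdef]
  have hF2π : F (2 * π) = 0 := h3
  -- periodicity of F
  have hFp : Function.Periodic F (2 * π) := by
    intro θ
    have hadd : F θ + (∫ z in θ..(θ + 2 * π), φP z) = F (θ + 2 * π) :=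
      intervalIntegral.integral_add_adjacent_intervals
        (hφPc.intervalIntegrable _ _) (hφPc.intervalIntegrable _ _)
    have hper : (∫ z in θ..(θ + 2 * π), φP z) = ∫ z in (0:ℝ)..(0 + 2 * π), φP z :=
      hφPp.intervalIntegral_add_eq θ 0
    rw [zero_add, h3] at hper
    rw [← hadd, hper, add_zero]
  -- oddness of F
  have hFodd : ∀ θ, F (-θ) = -F θ := by
    intro θ
    have h := intervalIntegral.integral_comp_neg (a := (0:ℝ)) (b := θ) φP
    rw [neg_zero] at h
    simp only [hφPe] at h
    have h2' : F θ = ∫ z in (-θ)..(0:ℝ), φP z := h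
    show (∫ z in (0:ℝ)..(-θ), φP z) = -F θ
    rw [h2', intervalIntegral.integral_symm]
  have hΨp : Function.Periodic (fun θ : ℝ => -∫ z in (0:ℝ)..θ, φP z) (2 * π) := by
    intro θ
    show -F (θ + 2 * π) = -F θ
    rw [hFp θ]
  refine ⟨hΨp, ?_⟩
  have hφ2π : φ (2 * π) = φ 0 := by have := hφp 0; rwa [zero_add] at this
  intro j ℓ
  fin_cases j <;> fin_cases ℓ
  -- (1,1): ⟨Ψ₁, φ'⟩ = 1 by integration by parts
  · show (∫ θ in (0:ℝ)..(2 * π), (-F θ) * φd θ) = 1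
    have hibp := intervalIntegral.integral_mul_deriv_eq_deriv_mul
      (u := fun θ => -F θ) (v := φ) (u' := fun θ => -φP θ) (v' := φd)
      (a := 0) (b := 2 * π)
      (fun x _ => (hFd x).neg) (fun x _ => hφd x)
      ((hφPc.neg).intervalIntegrable _ _) (hφdc.intervalIntegrable _ _)
    simp only [hF0, hF2π, neg_zero, zero_mul, mul_zero, sub_zero, zero_sub] at hibp
    rw [hibp]
    have heq : (∫ x in (0:ℝ)..(2 * π), -φP x * φ x)
        = -∫ x in (0:ℝ)..(2 * π), φ x * φP x := by
      rw [← intervalIntegral.integral_neg]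
      congr 1; ext x; ring
    rw [heq, h2, neg_neg]
  -- (1,2): ⟨Ψ₁, φ_M⟩ = 0 by parity
  · show (∫ θ in (0:ℝ)..(2 * π), (-F θ) * φM θ) = 0
    exact odd_periodic_integral_zero (fun θ => -F θ * φM θ) ((hFc.neg).mul hφMc)
      (fun θ => by rw [hFodd, hφMe]; ring)
      (fun θ => by simp only; rw [hFp θ, hφMp θ])
  -- (1,3): ⟨Ψ₁, φ_P⟩ = 0 by parity
  · show (∫ θ in (0:ℝ)..(2 * π), (-F θ) * φP θ) = 0
    exact odd_periodic_integral_zero (fun θ => -F θ * φP θ) ((hFc.neg).mul hφPc)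
      (fun θ => by rw [hFodd, hφPe]; ring)
      (fun θ => by simp only; rw [hFp θ, hφPp θ])
  -- (2,1): ⟨1, φ'⟩ = 0 by FTC and periodicity
  · show (∫ θ in (0:ℝ)..(2 * π), 1 * φd θ) = 0
    simp only [one_mul]
    rw [intervalIntegral.integral_eq_sub_of_hasDerivAt (fun x _ => hφd x)
      (hφdc.intervalIntegrable _ _), hφ2π, sub_self]
  -- (2,2): ⟨1, φ_M⟩ = 1
  · show (∫ θ in (0:ℝ)..(2 * π), 1 * φM θ) = 1
    simpa using h1
  -- (2,3): ⟨1, φ_P⟩ = 0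
  · show (∫ θ in (0:ℝ)..(2 * π), 1 * φP θ) = 0
    simpa using h3
  -- (3,1): ⟨φ, φ'⟩ = 0
  · show (∫ θ in (0:ℝ)..(2 * π), φ θ * φd θ) = 0
    have key : ∀ x, HasDerivAt (fun y => φ y * φ y / 2) (φ x * φd x) x := by
      intro x
      have h := ((hφd x).mul (hφd x)).div_const 2
      exact h.congr_deriv (by ring)
    rw [intervalIntegral.integral_eq_sub_of_hasDerivAt (fun x _ => key x)
      ((hφc.mul hφdc).intervalIntegrable _ _), hφ2π, sub_self]
  -- (3,2): ⟨φ, φ_M⟩ = 0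
  · show (∫ θ in (0:ℝ)..(2 * π), φ θ * φM θ) = 0
    exact h4
  -- (3,3): ⟨φ, φ_P⟩ = 1
  · show (∫ θ in (0:ℝ)..(2 * π), φ θ * φP θ) = 1
    exact h2
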